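/- Let 0 ≤ s < 1/2 and u ∈ H^{-s}(𝕋,ℝ) with zero mean. Define the sesquilinear form Q_u⁺(f,g) = ⟨-i∂ₓ f | g⟩ − ⟨u | g f̄⟩ + (1 + η_s(‖u‖_{-s}))⟨f | g⟩ on H^{1/2}_+. Then for all f ∈ H^{1/2}_+, (1/2)‖f‖_{1/2}² ≤ Q_u⁺(f,f) ≤ (3 + 2η_s(‖u‖_{-s}))‖f‖_{1/2}², so Q_u⁺ is a positive form equivalent to the H^{1/2} inner product. -/

import Mathlib

noncomputable section

open scoped BigOperators

/-- The weight `⟨n⟩ = max 1 |n|`. -/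
def wt (n : ℤ) : ℝ := max 1 |n|

/-- A Fourier coefficient sequence belongs to the Sobolev space `H^t(𝕋, ℂ)`. -/
def MemSob (t : ℝ) (a : ℤ → ℂ) : Prop :=
  Summable fun n : ℤ => wt n ^ (2 * t) * ‖a n‖ ^ 2

/-- The Sobolev `H^t` norm of a Fourier coefficient sequence. -/
def sobNorm (t : ℝ) (a : ℤ → ℂ) : ℝ :=
  Real.sqrt (∑' n : ℤ, wt n ^ (2 * t) * ‖a n‖ ^ 2)

/-- `f` lies in the Hardy space: vanishing negative Fourier modes. -/
def PlusSupp (b : ℤ → ℂ) : Prop := ∀ n : ℤ, n < 0 → b n = 0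

/-- `u` is real valued: `conj (û(n)) = û(-n)`. -/
def RealCoeff (a : ℤ → ℂ) : Prop := ∀ n : ℤ, (starRingEnd ℂ) (a n) = a (-n)

/-- `η_s(r) = r (2(1+r))^{(1+2s)/(1-2s)} C²`. -/
def etaS (s C r : ℝ) : ℝ := r * (2 * (1 + r)) ^ ((1 + 2 * s) / (1 - 2 * s)) * C ^ 2

/-- The pairing `⟨u | f f̄⟩` computed in Fourier coefficients. -/
def pairFF (a b : ℤ → ℂ) : ℂ :=
  ∑' n : ℤ, a n * (starRingEnd ℂ) (∑' m : ℤ, b m * (starRingEnd ℂ) (b (m - n)))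

/-- The quadratic form `Q_u⁺(f,f) = ⟨-i∂ₓ f | f⟩ − ⟨u | f f̄⟩ + (1+η_s(‖u‖_{-s}))‖f‖²`
in Fourier coefficients: `⟨-i∂ₓ f | f⟩ = ∑_n n |f̂(n)|²`. -/
def Qform (s C : ℝ) (a b : ℤ → ℂ) : ℝ :=
  (∑' n : ℤ, (n : ℝ) * ‖b n‖ ^ 2) - (pairFF a b).re +
    (1 + etaS s C (sobNorm (-s) a)) * sobNorm 0 b ^ 2

/-- For `u ∈ H^{-s}(𝕋,ℝ)` of zero mean, `0 ≤ s < 1/2`, granted the Toeplitz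
estimate `|⟨u|f f̄⟩| ≤ (1/2)‖f‖²_{1/2} + η_s(‖u‖_{-s})‖f‖²`, the form `Q_u⁺`
satisfies `(1/2)‖f‖²_{1/2} ≤ Q_u⁺(f,f) ≤ (3+2η_s(‖u‖_{-s}))‖f‖²_{1/2}`
for all `f ∈ H^{1/2}_+`. -/
theorem stmt4 (s : ℝ) (hs0 : 0 ≤ s) (hs : s < 1 / 2) (C : ℝ) (hC : 0 < C)
    (a : ℤ → ℂ) (ha : RealCoeff a) (ha0 : a 0 = 0) (haS : MemSob (-s) a)
    (hest : ∀ b : ℤ → ℂ, PlusSupp b → MemSob (1 / 2) b →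
      ‖pairFF a b‖ ≤ 1 / 2 * sobNorm (1 / 2) b ^ 2 +
        etaS s C (sobNorm (-s) a) * sobNorm 0 b ^ 2) :
    ∀ b : ℤ → ℂ, PlusSupp b → MemSob (1 / 2) b →
      1 / 2 * sobNorm (1 / 2) b ^ 2 ≤ Qform s C a b ∧
      Qform s C a b ≤ (3 + 2 * etaS s C (sobNorm (-s) a)) * sobNorm (1 / 2) b ^ 2 := by
  intro b hb hbS
  set η := etaS s C (sobNorm (-s) a) with hηdef
  have hwt1 : ∀ n : ℤ, (1 : ℝ) ≤ wt n := fun n => le_max_left _ _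
  have hwtpos : ∀ n : ℤ, (0 : ℝ) < wt n := fun n => lt_of_lt_of_le one_pos (hwt1 n)
  -- simplify the weights
  have hw1 : ∀ n : ℤ, wt n ^ (2 * (1 / 2 : ℝ)) = wt n := by
    intro n; norm_num
  have hw0 : ∀ n : ℤ, wt n ^ (2 * (0 : ℝ)) = 1 := by
    intro n; norm_num
  have hS1 : Summable fun n : ℤ => wt n * ‖b n‖ ^ 2 := by
    have := hbS; unfold MemSob at this; simpa [hw1] using this
  have hS0 : Summable fun n : ℤ => ‖b n‖ ^ 2 := by
    refine hS1.of_nonneg_of_le (fun n => sq_nonneg _) (fun n => ?_)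
    nlinarith [hwt1 n, sq_nonneg ‖b n‖]
  have hSD : Summable fun n : ℤ => (n : ℝ) * ‖b n‖ ^ 2 := by
    refine hS1.of_norm_bounded (fun n => ?_)
    rw [Real.norm_eq_abs, abs_mul, abs_of_nonneg (sq_nonneg ‖b n‖)]
    have : |(n : ℝ)| ≤ wt n := by
      simpa [wt] using le_max_right (1:ℝ) |(n:ℝ)|
    nlinarith [sq_nonneg ‖b n‖, this]
  set N1 := sobNorm (1 / 2) b ^ 2 with hN1def
  set N0 := sobNorm 0 b ^ 2 with hN0def
  set D := ∑' n : ℤ, (n : ℝ) * ‖b n‖ ^ 2 with hDdef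
  have hN1 : N1 = ∑' n : ℤ, wt n * ‖b n‖ ^ 2 := by
    rw [hN1def, sobNorm, Real.sq_sqrt]
    · exact tsum_congr fun n => by rw [hw1]
    · exact tsum_nonneg fun n => mul_nonneg (Real.rpow_nonneg (hwtpos n).le _) (sq_nonneg _)
  have hN0 : N0 = ∑' n : ℤ, ‖b n‖ ^ 2 := by
    rw [hN0def, sobNorm, Real.sq_sqrt]
    · exact tsum_congr fun n => by rw [hw0, one_mul]
    · exact tsum_nonneg fun n => mul_nonneg (Real.rpow_nonneg (hwtpos n).le _) (sq_nonneg _)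
  have hN0le : N0 ≤ N1 := by
    rw [hN0, hN1]
    refine Summable.tsum_le_tsum (fun n => ?_) hS0 hS1
    nlinarith [hwt1 n, sq_nonneg ‖b n‖]
  have hDle : D ≤ N1 := by
    rw [hDdef, hN1]
    refine Summable.tsum_le_tsum (fun n => ?_) hSD hS1
    have : (n : ℝ) ≤ wt n := le_trans (le_abs_self _) (by simpa [wt] using le_max_right (1:ℝ) |(n:ℝ)|)
    nlinarith [sq_nonneg ‖b n‖]
  have hlow : N1 - N0 ≤ D := by
    rw [hN1, hN0, ← Summable.tsum_sub hS1 hS0]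
    refine Summable.tsum_le_tsum (fun n => ?_) (hS1.sub hS0) hSD
    rcases lt_or_ge n 0 with h | h
    · simp [hb n h]
    · have : wt n ≤ (n : ℝ) + 1 := by
        rw [wt, abs_of_nonneg (by exact_mod_cast h : (0:ℝ) ≤ (n:ℝ))]
        rcases le_or_gt (1:ℝ) (n:ℝ) with h1 | h1
        · rw [max_eq_right h1]; linarith
        · rw [max_eq_left h1.le]
          have : (0:ℝ) ≤ (n:ℝ) := by exact_mod_cast h
          linarith
      nlinarith [sq_nonneg ‖b n‖]
  have hη : 0 ≤ η := by
    rw [hηdef, etaS]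
    have : 0 ≤ sobNorm (-s) a := Real.sqrt_nonneg _
    positivity
  have hpair : |(pairFF a b).re| ≤ 1 / 2 * N1 + η * N0 :=
    le_trans (Complex.abs_re_le_norm _) (hest b hb hbS)
  have habs := abs_le.mp hpair
  have hN1nn : 0 ≤ N1 := sq_nonneg _
  have hN0nn : 0 ≤ N0 := sq_nonneg _
  unfold Qform
  constructor
  · nlinarith
  · nlinarith
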